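/- Let g_0, ..., g_{m-1} be real with |g_k| ≤ ρ_0 ρ^k for all k, where ρ_0 > 0 and 0 < ρ ≤ 1 (in the case ρ < 1; for ρ = 1 interpret the geometric sum as m·ρ_0). Let f(θ) = Σ_{k=0}^{m-1} g_k cos(kθ) and M ≥ 2 a natural number. If f(qπ/M) ≥ ε for all q ∈ {0,...,M}, where ε = π ρ_0 (1−ρ^m)/(1−ρ) · (m−1)/(2M), then f(θ) ≥ 0 for all θ ∈ [0, π]. -/

import Mathlib

open Finset Real

lemma cos_lip (a b : ℝ) : |Real.cos a - Real.cos b| ≤ |a - b| := by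
  rw [Real.cos_sub_cos]
  have h1 : |Real.sin ((a + b) / 2)| ≤ 1 := Real.abs_sin_le_one _
  have h2 : |Real.sin ((a - b) / 2)| ≤ |(a - b) / 2| := Real.abs_sin_le_abs
  calc |-2 * Real.sin ((a + b) / 2) * Real.sin ((a - b) / 2)|
      = 2 * |Real.sin ((a + b) / 2)| * |Real.sin ((a - b) / 2)| := by
        rw [abs_mul, abs_mul]; norm_num
    _ ≤ 2 * 1 * |(a - b) / 2| := by
        apply mul_le_mul _ h2 (abs_nonneg _) (by norm_num)
        exact mul_le_mul_of_nonneg_left h1 (by norm_num)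
    _ = |a - b| := by rw [abs_div]; rw [abs_of_pos (by norm_num : (0:ℝ)<2)]; ring

/-- Sampled positivity with margin ε implies nonnegativity of
`f θ = Σ g_k cos(kθ)` on [0,π], under geometric decay of coefficients. -/
theorem stmt_1 (m M : ℕ) (hM : 2 ≤ M) (g : Fin m → ℝ) (ρ₀ ρ : ℝ)
    (hρ₀ : 0 < ρ₀) (hρ : 0 < ρ) (hρ1 : ρ < 1)
    (hg : ∀ k : Fin m, |g k| ≤ ρ₀ * ρ ^ (k : ℕ))
    (hsample : ∀ q : ℕ, q ≤ M →
      Real.pi * ρ₀ * (1 - ρ ^ m) / (1 - ρ) * (((m : ℝ) - 1) / (2 * M)) ≤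
        ∑ k : Fin m, g k * Real.cos ((k : ℝ) * ((q : ℝ) * Real.pi / M))) :
    ∀ θ ∈ Set.Icc (0 : ℝ) Real.pi,
      0 ≤ ∑ k : Fin m, g k * Real.cos ((k : ℝ) * θ) := by
  intro θ hθ
  obtain ⟨hθ0, hθπ⟩ := hθ
  have hπ : (0:ℝ) < Real.pi := Real.pi_pos
  have hMR : (0:ℝ) < M := by positivity
  rcases Nat.eq_zero_or_pos m with hm | hm
  · subst hm; simp
  have hm1 : (1:ℝ) ≤ m := by exact_mod_cast hm
  -- choose nearest sample point
  set x : ℝ := θ * M / Real.pi with hx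
  have hx0 : 0 ≤ x := by positivity
  have hxM : x ≤ M := by
    rw [hx, div_le_iff₀ hπ]
    calc θ * M ≤ Real.pi * M := by nlinarith
      _ = M * Real.pi := by ring
  set q : ℤ := round x with hq
  have hq0 : 0 ≤ q := by
    rw [hq, round_eq]
    exact Int.floor_nonneg.mpr (by linarith)
  have hqM : q ≤ (M : ℤ) := by
    have h1 : (q : ℝ) ≤ x + 1/2 := by
      rw [hq, round_eq]
      have := Int.floor_le (x + 1/2)
      push_cast at this ⊢; linarith
    have : (q : ℝ) < (M : ℝ) + 1 := by linarith
    exact_mod_cast Int.lt_add_one_iff.mp (by exact_mod_cast this)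
  set qn : ℕ := q.toNat with hqn
  have hqnr : (qn : ℝ) = (q : ℝ) := by
    rw [hqn]; exact_mod_cast Int.toNat_of_nonneg hq0
  have hqnM : qn ≤ M := by
    rw [hqn]; omega
  set θq : ℝ := (qn : ℝ) * Real.pi / M with hθq
  have hclose : |θ - θq| ≤ Real.pi / (2 * M) := by
    have heq : θ - θq = (x - q) * (Real.pi / M) := by
      rw [hθq, hqnr, hx]; field_simp
    rw [heq, abs_mul, abs_of_pos (by positivity : (0:ℝ) < Real.pi / M)]
    have h := abs_sub_round x
    calc |x - q| * (Real.pi / M) ≤ (1/2) * (Real.pi / M) := by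
          apply mul_le_mul_of_nonneg_right h (by positivity)
      _ = Real.pi / (2 * M) := by ring
  -- termwise bound
  have key : ∀ k : Fin m,
      |g k * Real.cos ((k : ℝ) * θ) - g k * Real.cos ((k : ℝ) * θq)| ≤
        ρ₀ * ρ ^ (k : ℕ) * (((m:ℝ) - 1) * (Real.pi / (2 * M))) := by
    intro k
    have hk : (k : ℝ) ≤ (m : ℝ) - 1 := by
      have : (k : ℕ) + 1 ≤ m := k.isLt
      have : ((k:ℕ) : ℝ) + 1 ≤ (m : ℝ) := by exact_mod_cast this
      linarith
    have hk0 : (0:ℝ) ≤ (k : ℝ) := by positivity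
    calc |g k * Real.cos ((k : ℝ) * θ) - g k * Real.cos ((k : ℝ) * θq)|
        = |g k| * |Real.cos ((k : ℝ) * θ) - Real.cos ((k : ℝ) * θq)| := by
          rw [← abs_mul]; ring_nf
      _ ≤ (ρ₀ * ρ ^ (k : ℕ)) * |(k : ℝ) * θ - (k : ℝ) * θq| := by
          apply mul_le_mul (hg k) (cos_lip _ _) (abs_nonneg _)
          positivity
      _ = (ρ₀ * ρ ^ (k : ℕ)) * ((k : ℝ) * |θ - θq|) := by
          rw [← mul_sub, abs_mul, abs_of_nonneg hk0]
      _ ≤ ρ₀ * ρ ^ (k : ℕ) * (((m:ℝ) - 1) * (Real.pi / (2 * M))) := by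
          apply mul_le_mul_of_nonneg_left _ (by positivity)
          apply mul_le_mul hk hclose (abs_nonneg _) (by linarith)
  -- geometric sum
  have hgeom : ∑ k : Fin m, ρ₀ * ρ ^ (k : ℕ) = ρ₀ * ((1 - ρ ^ m) / (1 - ρ)) := by
    rw [← Finset.mul_sum, Fin.sum_univ_eq_sum_range]
    congr 1
    have h := geom_sum_eq (ne_of_lt hρ1) m
    rw [h]
    rw [div_eq_div_iff (by linarith) (by linarith)]
    ring
  -- assemble
  have hdiff : |(∑ k : Fin m, g k * Real.cos ((k : ℝ) * θ)) -
      ∑ k : Fin m, g k * Real.cos ((k : ℝ) * θq)| ≤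
      ρ₀ * ((1 - ρ ^ m) / (1 - ρ)) * (((m:ℝ) - 1) * (Real.pi / (2 * M))) := by
    rw [← Finset.sum_sub_distrib]
    calc |∑ k : Fin m, (g k * Real.cos ((k : ℝ) * θ) - g k * Real.cos ((k : ℝ) * θq))|
        ≤ ∑ k : Fin m, |g k * Real.cos ((k : ℝ) * θ) - g k * Real.cos ((k : ℝ) * θq)| :=
          Finset.abs_sum_le_sum_abs _ _
      _ ≤ ∑ k : Fin m, ρ₀ * ρ ^ (k : ℕ) * (((m:ℝ) - 1) * (Real.pi / (2 * M))) :=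
          Finset.sum_le_sum (fun k _ => key k)
      _ = ρ₀ * ((1 - ρ ^ m) / (1 - ρ)) * (((m:ℝ) - 1) * (Real.pi / (2 * M))) := by
          rw [← Finset.sum_mul, hgeom]
  have hs := hsample qn hqnM
  have hε : Real.pi * ρ₀ * (1 - ρ ^ m) / (1 - ρ) * (((m : ℝ) - 1) / (2 * M)) =
      ρ₀ * ((1 - ρ ^ m) / (1 - ρ)) * (((m:ℝ) - 1) * (Real.pi / (2 * M))) := by
    field_simp
  rw [hε] at hs
  have := abs_le.mp hdiff
  linarith [this.1]
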